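/- Let t, r, χ be integers with t ≤ -2, r < 0, and r + t + 2 < χ. Define the rational numbers TB = (t - 1) + (-t^2)/(t + 1) and ROT = (r + 1) - (r·t)/(t + 1). Then -|TB| + |ROT| > -χ / |t + 1|. -/

import Mathlib

theorem stmt_3 (t r χ : ℤ) (ht : t ≤ -2) (hr : r < 0) (hχ : r + t + 2 < χ) :
    -|((t : ℚ) - 1) + (-(t : ℚ) ^ 2) / ((t : ℚ) + 1)| +
      |((r : ℚ) + 1) - ((r : ℚ) * (t : ℚ)) / ((t : ℚ) + 1)| >
      -(χ : ℚ) / |(t : ℚ) + 1| := by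
  have ht' : (t : ℚ) ≤ -2 := by exact_mod_cast ht
  have hr' : (r : ℚ) < 0 := by exact_mod_cast hr
  have hχ' : (r : ℚ) + t + 2 < χ := by exact_mod_cast hχ
  have hu : (t : ℚ) + 1 < 0 := by linarith
  have hne : (t : ℚ) + 1 ≠ 0 := ne_of_lt hu
  have h1 : ((t : ℚ) - 1) + (-(t : ℚ) ^ 2) / ((t : ℚ) + 1) = -1 / ((t : ℚ) + 1) := by
    field_simp; ring
  have h2 : ((r : ℚ) + 1) - ((r : ℚ) * (t : ℚ)) / ((t : ℚ) + 1)
      = ((r : ℚ) + (t : ℚ) + 1) / ((t : ℚ) + 1) := by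
    field_simp; ring
  have hp1 : (0:ℚ) < -1 / ((t : ℚ) + 1) := by
    apply div_pos_of_neg_of_neg <;> linarith
  have hp2 : (0:ℚ) < ((r : ℚ) + (t : ℚ) + 1) / ((t : ℚ) + 1) := by
    apply div_pos_of_neg_of_neg <;> linarith
  rw [h1, h2, abs_of_pos hp1, abs_of_pos hp2, abs_of_neg hu]
  rw [show -(-1/((t:ℚ)+1)) = 1/((t:ℚ)+1) by ring, ← add_div, neg_div_neg_eq, gt_iff_lt, div_lt_div_right_of_neg hu]
  linarith
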